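/- arXiv:0811.2909 — 3 statements merged into one kernel-verified Lean document; each statement's English description precedes it below -/
import Mathlib

section
/- Let P_n ∈ ℤ[x] satisfy P_n(t + t⁻¹) = tⁿ + t^{−n} for n ≥ 1 and P_0 = 1. For each n ≥ 0, write xⁿ = Σ_{i=0}^{n} λ_{i,n} P_i with λ_{i,n} ∈ ℤ (possible since P_i is monic of degree i for i ≥ 1). Then: (1) λ_{i,n} = 0 whenever i ≢ n (mod 2); (2) λ_{i,n} ≥ 0 for all i, n; and (3) λ_{i,n} < λ_{i−2,n} for every i ≥ 2 with i ≡ n (mod 2) and n ≥ 1. -/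
open Polynomial

/-- The normalized Chebyshev polynomials of the first kind:
`Q 0 = 2`, `Q 1 = X`, `Q (n+2) = X * Q (n+1) - Q n`
(these satisfy `Q n (t + t⁻¹) = tⁿ + t⁻ⁿ`). -/
noncomputable def chebQ : ℕ → Polynomial ℤ
  | 0 => 2
  | 1 => Polynomial.X
  | (n + 2) => Polynomial.X * chebQ (n + 1) - chebQ n

/-- The family `P` of the statement: `P 0 = 1` and `P n` is the `n`-th normalized
Chebyshev polynomial of the first kind for `n ≥ 1`. -/
noncomputable def chebP (n : ℕ) : Polynomial ℤ :=
  if n = 0 then 1 else chebQ n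

/-- explicit coefficients -/
noncomputable def chebMu (i n : ℕ) : ℤ :=
  if i ≤ n ∧ i % 2 = n % 2 then (n.choose ((n - i) / 2) : ℤ) else 0

lemma chebQ_degree_le : ∀ n, (chebQ n).degree ≤ n := by
  intro n
  induction n using Nat.strong_induction_on with
  | _ n ih =>
    match n with
    | 0 => rw [show chebQ 0 = C 2 by simp [chebQ]]; exact degree_C_le.trans (by norm_num)
    | 1 => simp [chebQ, degree_X_le]
    | (m + 2) =>
      show (Polynomial.X * chebQ (m + 1) - chebQ m).degree ≤ ((m + 2 : ℕ) : WithBot ℕ)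
      refine (degree_sub_le _ _).trans (max_le ?_ ?_)
      · refine (degree_mul_le _ _).trans ?_
        have := ih (m + 1) (by omega)
        have hx : (Polynomial.X : Polynomial ℤ).degree ≤ 1 := degree_X_le
        calc (Polynomial.X : Polynomial ℤ).degree + (chebQ (m+1)).degree
            ≤ 1 + ((m+1 : ℕ) : WithBot ℕ) := add_le_add hx this
          _ ≤ ((m + 2 : ℕ) : WithBot ℕ) := by
              push_cast; rw [add_comm]; norm_cast
      · exact (ih m (by omega)).trans (by exact_mod_cast Nat.cast_le.mpr (show m ≤ m + 2 by omega))

lemma chebQ_monic : ∀ n, (chebQ (n + 1)).Monic ∧ (chebQ (n + 1)).natDegree = n + 1 := by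
  intro n
  induction n using Nat.strong_induction_on with
  | _ n ih =>
    match n with
    | 0 => constructor <;> simp [chebQ]
    | (m + 1) =>
      have hdq : (chebQ m).degree ≤ m := chebQ_degree_le m
      have hmon : (Polynomial.X * chebQ (m + 1)).Monic := by
        exact (monic_X).mul (ih m (by omega)).1
      have hdeg : (Polynomial.X * chebQ (m + 1)).natDegree = m + 2 := by
        rw [natDegree_mul (X_ne_zero) (ih m (by omega)).1.ne_zero, natDegree_X,
          (ih m (by omega)).2]; omega
      have hlt : (chebQ m).degree < (Polynomial.X * chebQ (m + 1)).degree := by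
        rw [degree_eq_natDegree hmon.ne_zero, hdeg]
        refine lt_of_le_of_lt hdq ?_
        exact_mod_cast Nat.cast_lt.mpr (show m < m + 2 by omega)
      have h1 : (chebQ (m + 2)).Monic := by
        show (Polynomial.X * chebQ (m + 1) - chebQ m).Monic
        exact hmon.sub_of_left hlt
      refine ⟨h1, ?_⟩
      show (Polynomial.X * chebQ (m + 1) - chebQ m).natDegree = m + 2
      rw [← hdeg]
      exact natDegree_sub_eq_left_of_natDegree_lt (by
        have : (chebQ m).natDegree ≤ m := natDegree_le_iff_degree_le.mpr hdq
        omega)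

lemma chebP_monic (n : ℕ) : (chebP n).Monic := by
  cases n with
  | zero => simp [chebP, monic_one]
  | succ m => simpa [chebP] using (chebQ_monic m).1

lemma chebP_natDegree (n : ℕ) : (chebP n).natDegree = n := by
  cases n with
  | zero => simp [chebP]
  | succ m => simpa [chebP] using (chebQ_monic m).2

lemma chebP_unique : ∀ (N : ℕ) (c : ℕ → ℤ),
    (∑ i ∈ Finset.range (N + 1), Polynomial.C (c i) * chebP i) = 0 →
    ∀ i ≤ N, c i = 0 := by
  intro N
  induction N with
  | zero =>
    intro c h i hi
    interval_cases i
    have : Polynomial.C (c 0) = 0 := by simpa [chebP] using h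
    simpa using this
  | succ M IH =>
    intro c h i hi
    have hcN : c (M + 1) = 0 := by
      have h2 := congrArg (fun p => Polynomial.coeff p (M + 1)) h
      simp only [finset_sum_coeff, coeff_zero, coeff_C_mul] at h2
      rw [Finset.sum_range_succ] at h2
      have hz : ∀ j ∈ Finset.range (M + 1), c j * (chebP j).coeff (M + 1) = 0 := by
        intro j hj
        rw [coeff_eq_zero_of_natDegree_lt (by
          rw [chebP_natDegree]; exact Finset.mem_range.mp hj), mul_zero]
      rw [Finset.sum_eq_zero hz, zero_add] at h2
      have : (chebP (M + 1)).coeff (M + 1) = 1 := by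
        have := (chebP_monic (M + 1)).coeff_natDegree
        rwa [chebP_natDegree] at this
      rw [this, mul_one] at h2
      omega
    rcases Nat.lt_or_ge i (M + 1) with hlt | hge
    · refine IH c ?_ i (by omega)
      rw [Finset.sum_range_succ, hcN] at h
      simpa using h
    · have : i = M + 1 := by omega
      rw [this]; exact hcN

noncomputable def chebE (i : ℕ) : ℤ := if i = 0 then 0 else if i = 1 then 2 else 1

lemma chebP_xmul (i : ℕ) :
    Polynomial.X * chebP i = chebP (i + 1) + Polynomial.C (chebE i) * chebP (i - 1) := by
  match i with
  | 0 => simp [chebP, chebE, chebQ]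
  | 1 =>
    show Polynomial.X * Polynomial.X = chebQ 2 + Polynomial.C (2 : ℤ) * 1
    show Polynomial.X * Polynomial.X = Polynomial.X * chebQ 1 - chebQ 0 + Polynomial.C (2 : ℤ) * 1
    show Polynomial.X * Polynomial.X
      = Polynomial.X * Polynomial.X - 2 + Polynomial.C (2 : ℤ) * 1
    have : (Polynomial.C (2:ℤ)) = (2 : Polynomial ℤ) := by norm_num
    rw [this]; ring
  | (m + 2) =>
    show Polynomial.X * chebQ (m + 2) = chebQ (m + 3) + Polynomial.C (1 : ℤ) * chebQ (m + 1)
    have : chebQ (m + 3) = Polynomial.X * chebQ (m + 2) - chebQ (m + 1) := rfl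
    rw [this, Polynomial.C_1, one_mul]; ring

lemma chebMu_zero {i n : ℕ} (h : n < i) : chebMu i n = 0 := by
  simp only [chebMu, if_neg]; omega

lemma chebMu_rec0 (n : ℕ) : chebMu 0 (n + 1) = 2 * chebMu 1 n := by
  rcases Nat.even_or_odd n with he | ho
  · have h2 : n % 2 = 0 := Nat.even_iff.mp he
    rw [chebMu, chebMu, if_neg (by omega), if_neg (by omega)]; ring
  · have h2 : n % 2 = 1 := Nat.odd_iff.mp ho
    obtain ⟨m, rfl⟩ := ho
    rw [chebMu, chebMu, if_pos (by omega), if_pos (by omega)]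
    have e1 : (2 * m + 1 + 1 - 0) / 2 = m + 1 := by omega
    have e2 : (2 * m + 1 - 1) / 2 = m := by omega
    rw [e1, e2]
    have pascal : (2 * m + 1 + 1).choose (m + 1)
        = (2 * m + 1).choose m + (2 * m + 1).choose (m + 1) := Nat.choose_succ_succ' _ _
    have symm : (2 * m + 1).choose (m + 1) = (2 * m + 1).choose m := by
      have := Nat.choose_symm (show m + 1 ≤ 2 * m + 1 by omega)
      have e3 : 2 * m + 1 - (m + 1) = m := by omega
      rw [e3] at this
      omega
    push_cast [pascal, symm]; ring

lemma chebMu_rec1 (j n : ℕ) : chebMu (j + 1) (n + 1) = chebMu j n + chebMu (j + 2) n := by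
  by_cases hc : j ≤ n ∧ j % 2 = n % 2
  · obtain ⟨hjn, hpar⟩ := hc
    rcases Nat.lt_or_ge n (j + 2) with hsmall | hbig
    · -- j = n (parity forces)
      have hj : j = n := by omega
      subst hj
      rw [chebMu, chebMu, chebMu, if_pos (by omega), if_pos (by omega), if_neg (by omega)]
      simp
    · rw [chebMu, chebMu, chebMu, if_pos (by omega), if_pos (by omega), if_pos (by omega)]
      obtain ⟨k, hk⟩ : ∃ k, n - j = 2 * (k + 1) := by
        have : (n - j) % 2 = 0 := by omega
        have : 2 ≤ n - j := by omega
        exact ⟨(n - j) / 2 - 1, by omega⟩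
      have e1 : (n + 1 - (j + 1)) / 2 = k + 1 := by omega
      have e2 : (n - j) / 2 = k + 1 := by omega
      have e3 : (n - (j + 2)) / 2 = k := by omega
      rw [e1, e2, e3]
      have pascal : (n + 1).choose (k + 1) = n.choose k + n.choose (k + 1) :=
        Nat.choose_succ_succ _ _
      push_cast [pascal]; ring
  · have h1 : chebMu (j + 1) (n + 1) = 0 := by rw [chebMu, if_neg (by omega)]
    have h2 : chebMu j n = 0 := by rw [chebMu, if_neg (by omega)]
    have h3 : chebMu (j + 2) n = 0 := by rw [chebMu, if_neg (by omega)]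
    rw [h1, h2, h3]; ring

lemma sum_extend {N M : ℕ} (h : N ≤ M) (c : ℕ → ℤ) (f : ℕ → Polynomial ℤ)
    (hc : ∀ i, N ≤ i → c i = 0) :
    ∑ i ∈ Finset.range M, Polynomial.C (c i) * f i
      = ∑ i ∈ Finset.range N, Polynomial.C (c i) * f i :=
  (Finset.sum_subset (Finset.range_subset_range.mpr h) (fun i _ hni => by
     rw [hc i (by simpa using hni)]; simp)).symm

lemma cheb_key : ∀ n : ℕ, (Polynomial.X : Polynomial ℤ) ^ n
    = ∑ i ∈ Finset.range (n + 1), Polynomial.C (chebMu i n) * chebP i := by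
  intro n
  induction n with
  | zero =>
    have : chebMu 0 0 = 1 := by simp [chebMu]
    simp [this, chebP]
  | succ n IH =>
    have hext : (Polynomial.X : Polynomial ℤ) ^ n
        = ∑ i ∈ Finset.range (n + 2), Polynomial.C (chebMu i n) * chebP i := by
      rw [IH, sum_extend (show n + 1 ≤ n + 2 by omega) _ _
        (fun i hi => chebMu_zero (by omega))]
    have lhs_eq : (Polynomial.X : Polynomial ℤ) ^ (n + 1)
        = (∑ i ∈ Finset.range (n + 2), Polynomial.C (chebMu i n) * chebP (i + 1))
          + ∑ i ∈ Finset.range (n + 2),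
              Polynomial.C (chebMu i n * chebE i) * chebP (i - 1) := by
      rw [pow_succ, mul_comm, hext, Finset.mul_sum, ← Finset.sum_add_distrib]
      refine Finset.sum_congr rfl fun i _ => ?_
      rw [mul_comm (Polynomial.X) (Polynomial.C (chebMu i n) * chebP i), mul_assoc,
        mul_comm (chebP i) Polynomial.X, chebP_xmul i, Polynomial.C_mul]
      ring
    rw [lhs_eq]
    have rhs_eq : ∑ j ∈ Finset.range (n + 2), Polynomial.C (chebMu j (n + 1)) * chebP j
        = (∑ j ∈ Finset.range (n + 2), Polynomial.C (chebMu j n) * chebP (j + 1))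
          + ((∑ j ∈ Finset.range (n + 2), Polynomial.C (chebMu (j + 2) n) * chebP (j + 1))
            + Polynomial.C (2 * chebMu 1 n) * chebP 0) := by
      rw [Finset.sum_range_succ' (fun j => Polynomial.C (chebMu j (n + 1)) * chebP j) (n + 1)]
      have step1 : ∑ j ∈ Finset.range (n + 1),
          Polynomial.C (chebMu (j + 1) (n + 1)) * chebP (j + 1)
          = ∑ j ∈ Finset.range (n + 2),
              Polynomial.C (chebMu (j + 1) (n + 1)) * chebP (j + 1) := by
        rw [sum_extend (show n + 1 ≤ n + 2 by omega) _ _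
          (fun j hj => chebMu_zero (by omega))]
      rw [step1, chebMu_rec0]
      have step2 : ∀ j, Polynomial.C (chebMu (j + 1) (n + 1)) * chebP (j + 1)
          = Polynomial.C (chebMu j n) * chebP (j + 1)
            + Polynomial.C (chebMu (j + 2) n) * chebP (j + 1) := by
        intro j
        rw [chebMu_rec1, Polynomial.C_add, add_mul]
      simp_rw [step2]
      rw [Finset.sum_add_distrib]
      ring
    rw [rhs_eq]
    congr 1
    -- remaining: second pieces equal
    rw [Finset.sum_range_succ' (fun i => Polynomial.C (chebMu i n * chebE i) * chebP (i - 1))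
      (n + 1)]
    rw [Finset.sum_range_succ'
      (fun i => Polynomial.C (chebMu (i + 1) n * chebE (i + 1)) * chebP (i + 1 - 1)) n]
    have e0 : Polynomial.C (chebMu 0 n * chebE 0) * chebP (0 - 1) = 0 := by
      simp [chebE]
    have e1 : Polynomial.C (chebMu (0 + 1) n * chebE (0 + 1)) * chebP (0 + 1 - 1)
        = Polynomial.C (2 * chebMu 1 n) * chebP 0 := by
      simp only [chebE]
      norm_num [mul_comm]
    have e2 : ∀ i, Polynomial.C (chebMu (i + 1 + 1) n * chebE (i + 1 + 1)) * chebP (i + 1 + 1 - 1)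
        = Polynomial.C (chebMu (i + 2) n) * chebP (i + 1) := by
      intro i
      simp [chebE]
    simp_rw [e0, e1, e2]
    rw [add_zero]
    congr 1
    rw [sum_extend (show n ≤ n + 2 by omega) (fun j => chebMu (j + 2) n) (fun j => chebP (j + 1))
      (fun j hj => chebMu_zero (by omega))]

lemma choose_strict_mono {n k : ℕ} (h : 2 * k + 2 ≤ n) : n.choose k < n.choose (k + 1) := by
  have h1 := Nat.choose_succ_right_eq n k
  have hpos : 0 < n.choose k := Nat.choose_pos (by omega)
  have hnk : k + 2 ≤ n - k := by omega
  by_contra hc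
  push_neg at hc
  have : n.choose (k + 1) * (k + 1) ≤ n.choose k * (k + 1) := Nat.mul_le_mul_right _ hc
  rw [h1] at this
  have : n.choose k * (k + 2) ≤ n.choose k * (k + 1) :=
    le_trans (Nat.mul_le_mul_left _ hnk) this
  nlinarith

theorem coeffs_of_powers_in_chebP_basis
    (lam : ℕ → ℕ → ℤ)
    (hexp : ∀ n : ℕ, (Polynomial.X : Polynomial ℤ) ^ n =
      ∑ i ∈ Finset.range (n + 1), Polynomial.C (lam i n) * chebP i) :
    (∀ i n : ℕ, i ≤ n → i % 2 ≠ n % 2 → lam i n = 0) ∧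
    (∀ i n : ℕ, i ≤ n → 0 ≤ lam i n) ∧
    (∀ i n : ℕ, 2 ≤ i → i ≤ n → i % 2 = n % 2 → 1 ≤ n → lam i n < lam (i - 2) n) := by
  have hlm : ∀ i n : ℕ, i ≤ n → lam i n = chebMu i n := by
    intro i n hin
    have hz : ∑ j ∈ Finset.range (n + 1), Polynomial.C (lam j n - chebMu j n) * chebP j = 0 := by
      simp_rw [Polynomial.C_sub, sub_mul, Finset.sum_sub_distrib, ← hexp n, ← cheb_key n,
        sub_self]
    have := chebP_unique n (fun j => lam j n - chebMu j n) hz i hin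
    exact sub_eq_zero.mp (by simpa using this)
  refine ⟨?_, ?_, ?_⟩
  · intro i n hin hpar
    rw [hlm i n hin, chebMu, if_neg (by omega)]
  · intro i n hin
    rw [hlm i n hin, chebMu]
    split
    · positivity
    · exact le_refl 0
  · intro i n h2 hin hpar hn
    rw [hlm i n hin, hlm (i - 2) n (by omega)]
    rw [chebMu, chebMu, if_pos ⟨hin, hpar⟩, if_pos ⟨by omega, by omega⟩]
    have hk : (n - (i - 2)) / 2 = (n - i) / 2 + 1 := by omega
    rw [hk]
    exact_mod_cast choose_strict_mono (show 2 * ((n - i) / 2) + 2 ≤ n by omega)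
end

section
/- Let K be a field and u₁, u₂ nonzero elements of (a field extension of) the field of rational functions K(u₁,u₂). Define the sequence (x_n)_{n∈ℤ} in K(u₁,u₂) by x₁ = u₁, x₂ = u₂, and x_{n+1}·x_{n−1} = x_n² + 1 (assuming all x_n are nonzero so the recurrence makes sense). Set z = (1 + u₁² + u₂²)/(u₁u₂). Then for every n, z·x_n = x_{n−1} + x_{n+1}. -/
open MvPolynomial

theorem kronecker_cluster_linear_recurrence
    (K : Type*) [Field K]
    (x : ℤ → FractionRing (MvPolynomial (Fin 2) K))
    (u : Fin 2 → FractionRing (MvPolynomial (Fin 2) K))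
    (hu : ∀ i, u i = algebraMap (MvPolynomial (Fin 2) K) _ (MvPolynomial.X i))
    (hx1 : x 1 = u 0) (hx2 : x 2 = u 1)
    (hne : ∀ n : ℤ, x n ≠ 0)
    (hrec : ∀ n : ℤ, x (n + 1) * x (n - 1) = x n ^ 2 + 1) :
    ∀ n : ℤ, (1 + u 0 ^ 2 + u 1 ^ 2) / (u 0 * u 1) * x n = x (n - 1) + x (n + 1) := by
  have h1 : x 1 ≠ 0 := hne 1
  have h2 : x 2 ≠ 0 := hne 2
  set z := (1 + u 0 ^ 2 + u 1 ^ 2) / (u 0 * u 1) with hz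
  have hu1 : u 0 ≠ 0 := hx1 ▸ h1
  have hu2 : u 1 ≠ 0 := hx2 ▸ h2
  have hP1 : z * x 1 = x 0 + x 2 := by
    have h := hrec 1
    norm_num at h
    rw [hz, ← hx1, ← hx2]
    field_simp
    linear_combination -h
  have up : ∀ n : ℤ, z * x n = x (n - 1) + x (n + 1) →
      z * x (n + 1) = x n + x (n + 2) := by
    intro n hind
    have hr1 := hrec n
    have hr2 := hrec (n + 1)
    rw [show n + 1 + 1 = n + 2 by ring, show n + 1 - 1 = n by ring] at hr2
    apply mul_left_cancel₀ (hne n)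
    linear_combination x (n + 1) * hind + hr1 - hr2
  have down : ∀ n : ℤ, z * x n = x (n - 1) + x (n + 1) →
      z * x (n - 1) = x (n - 2) + x n := by
    intro n hind
    have hr1 := hrec n
    have hr2 := hrec (n - 1)
    rw [show n - 1 + 1 = n by ring, show n - 1 - 1 = n - 2 by ring] at hr2
    apply mul_left_cancel₀ (hne n)
    linear_combination x (n - 1) * hind + hr1 - hr2
  intro n
  induction n using Int.induction_on with
  | zero =>
    have h := down 1 hP1
    norm_num at h
    rw [show (0:ℤ) - 1 = -1 by ring, show (0:ℤ) + 1 = 1 by ring]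
    exact h
  | succ i ih =>
    have h := up i ih
    rw [show (i:ℤ) + 1 - 1 = i by ring]
    exact h
  | pred i ih =>
    have h := down (-i) ih
    rw [show -(i:ℤ) - 1 - 1 = -i - 2 by ring, show -(i:ℤ) - 1 + 1 = -i by ring]
    exact h
end

section
/- Let C be a 2-Calabi–Yau triangulated category over a field k (so Ext¹_C(X,Y) ≅ D Ext¹_C(Y,X) for all objects, where D is k-linear duality; in particular dim Ext¹(X,Y) = dim Ext¹(Y,X)). Write [X,Y]¹ = dim_k Hom_C(X, Y[1]). Suppose M, N are objects with Ext¹_C(N,M) ≠ 0 and M → Z → N --ε--> M[1] is a non-split triangle. Then [Z,Z]¹ < [M ⊕ N, M ⊕ N]¹. -/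
open CategoryTheory CategoryTheory.Limits CategoryTheory.Pretriangulated Module

section Aux

variable {k : Type*} [Field k]

lemma aux_rank_le {A B C' : Type*} [AddCommGroup A] [AddCommGroup B] [AddCommGroup C']
    [Module k A] [Module k B] [Module k C']
    [FiniteDimensional k A] [FiniteDimensional k B] [FiniteDimensional k C']
    (u : A →ₗ[k] B) (v : B →ₗ[k] C')
    (h : LinearMap.ker v ≤ LinearMap.range u) :
    finrank k B ≤ finrank k A + finrank k C' := by
  have h1 := LinearMap.finrank_range_add_finrank_ker v
  have h2 : finrank k (LinearMap.ker v) ≤ finrank k A :=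
    le_trans (Submodule.finrank_mono h) (LinearMap.finrank_range_le u)
  have h3 : finrank k (LinearMap.range v) ≤ finrank k C' := Submodule.finrank_le _
  omega

lemma aux_rank_lt {A B C' : Type*} [AddCommGroup A] [AddCommGroup B] [AddCommGroup C']
    [Module k A] [Module k B] [Module k C']
    [FiniteDimensional k A] [FiniteDimensional k B] [FiniteDimensional k C']
    (u : A →ₗ[k] B) (v : B →ₗ[k] C')
    (h : LinearMap.ker v ≤ LinearMap.range u)
    (x : A) (hx : x ≠ 0) (hux : u x = 0) :
    finrank k B < finrank k A + finrank k C' := by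
  have h1 := LinearMap.finrank_range_add_finrank_ker v
  have h4 := LinearMap.finrank_range_add_finrank_ker u
  have hker : 0 < finrank k (LinearMap.ker u) :=
    by
    haveI : Nontrivial (LinearMap.ker u) := ⟨⟨x, hux⟩, 0, by simp [Subtype.ext_iff, hx]⟩
    exact Module.finrank_pos
  have h2 : finrank k (LinearMap.ker v) ≤ finrank k (LinearMap.range u) :=
    Submodule.finrank_mono h
  have h3 : finrank k (LinearMap.range v) ≤ finrank k C' := Submodule.finrank_le _
  omega

variable {C : Type*} [Category C] [Preadditive C] [Linear k C] [HasBinaryBiproducts C]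

/-- Hom out of a biproduct splits. -/
noncomputable def biprodHomEquivLeft (A B W : C) :
    ((A ⊞ B : C) ⟶ W) ≃ₗ[k] ((A ⟶ W) × (B ⟶ W)) where
  toFun φ := (biprod.inl ≫ φ, biprod.inr ≫ φ)
  map_add' φ ψ := by simp [Preadditive.comp_add]
  map_smul' c φ := by simp
  invFun p := biprod.desc p.1 p.2
  left_inv φ := by apply biprod.hom_ext' <;> simp
  right_inv p := by simp

noncomputable def biprodHomEquivRight (X A B : C) :
    ((X : C) ⟶ A ⊞ B) ≃ₗ[k] ((X ⟶ A) × (X ⟶ B)) where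
  toFun φ := (φ ≫ biprod.fst, φ ≫ biprod.snd)
  map_add' φ ψ := by simp [Preadditive.add_comp]
  map_smul' c φ := by simp
  invFun p := biprod.lift p.1 p.2
  left_inv φ := by apply biprod.hom_ext <;> simp
  right_inv p := by simp

lemma finrank_biprod_left (A B W : C) [∀ X Y : C, FiniteDimensional k (X ⟶ Y)] :
    finrank k ((A ⊞ B : C) ⟶ W) = finrank k (A ⟶ W) + finrank k (B ⟶ W) := by
  rw [(biprodHomEquivLeft (k := k) A B W).finrank_eq, Module.finrank_prod]

lemma finrank_biprod_right (X A B : C) [∀ X Y : C, FiniteDimensional k (X ⟶ Y)] :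
    finrank k ((X : C) ⟶ A ⊞ B) = finrank k (X ⟶ A) + finrank k (X ⟶ B) := by
  rw [(biprodHomEquivRight (k := k) X A B).finrank_eq, Module.finrank_prod]

end Aux

theorem selfext_middle_lt_of_nonsplit
    {k : Type*} [Field k] {C : Type*} [Category C] [Preadditive C] [Linear k C]
    [HasZeroObject C] [HasShift C ℤ] [∀ n : ℤ, (shiftFunctor C n).Additive]
    [Pretriangulated C] [HasBinaryBiproducts C]
    [∀ X Y : C, FiniteDimensional k (X ⟶ Y)]
    (hCY : ∀ X Y : C,
      Module.finrank k (X ⟶ Y⟦(1 : ℤ)⟧) = Module.finrank k (Y ⟶ X⟦(1 : ℤ)⟧))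
    (M Z N : C) (f : M ⟶ Z) (g : Z ⟶ N) (ε : N ⟶ M⟦(1 : ℤ)⟧)
    (hT : Triangle.mk f g ε ∈ distTriang C)
    (hε : ε ≠ 0) :
    Module.finrank k (Z ⟶ Z⟦(1 : ℤ)⟧) <
      Module.finrank k ((M ⊞ N : C) ⟶ (M ⊞ N : C)⟦(1 : ℤ)⟧) := by
  -- contravariant exactness: for any R, Hom(N,R) → Hom(Z,R) → Hom(M,R) exact
  have exact : ∀ R : C, LinearMap.ker (Linear.leftComp (R := k) R f)
      ≤ LinearMap.range (Linear.leftComp (R := k) R g) := by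
    intro R φ hφ
    obtain ⟨ψ, hψ⟩ := Triangle.yoneda_exact₂ _ hT φ hφ
    exact ⟨ψ, hψ.symm⟩
  -- key inequalities
  have key_le : ∀ R : C, finrank k (Z ⟶ R) ≤ finrank k (N ⟶ R) + finrank k (M ⟶ R) :=
    fun R => aux_rank_le _ _ (exact R)
  have key_lt : finrank k (Z ⟶ M⟦(1:ℤ)⟧) <
      finrank k (N ⟶ M⟦(1:ℤ)⟧) + finrank k (M ⟶ M⟦(1:ℤ)⟧) := by
    refine aux_rank_lt _ _ (exact _) ε hε ?_
    exact comp_distTriang_mor_zero₂₃ _ hT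
  -- Hom(Z,Z[1]) ≤ Hom(N,Z[1]) + Hom(M,Z[1]) = Hom(Z,N[1]) + Hom(Z,M[1])
  have step1 : finrank k (Z ⟶ Z⟦(1:ℤ)⟧) ≤
      finrank k (Z ⟶ N⟦(1:ℤ)⟧) + finrank k (Z ⟶ M⟦(1:ℤ)⟧) := by
    have := key_le (Z⟦(1:ℤ)⟧)
    rwa [hCY N Z, hCY M Z] at this
  have step2 : finrank k (Z ⟶ N⟦(1:ℤ)⟧) ≤
      finrank k (N ⟶ N⟦(1:ℤ)⟧) + finrank k (M ⟶ N⟦(1:ℤ)⟧) := key_le _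
  -- RHS computation
  haveI : PreservesBinaryBiproducts (shiftFunctor C (1:ℤ)) :=
    preservesBinaryBiproducts_of_preservesBiproducts _
  have e : ((M ⊞ N : C)⟦(1:ℤ)⟧) ≅ (M⟦(1:ℤ)⟧ ⊞ N⟦(1:ℤ)⟧ : C) :=
    (shiftFunctor C (1:ℤ)).mapBiprod M N
  have hRHS : finrank k ((M ⊞ N : C) ⟶ (M ⊞ N : C)⟦(1 : ℤ)⟧) =
      finrank k (M ⟶ M⟦(1:ℤ)⟧) + finrank k (M ⟶ N⟦(1:ℤ)⟧)
      + (finrank k (N ⟶ M⟦(1:ℤ)⟧) + finrank k (N ⟶ N⟦(1:ℤ)⟧)) := by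
    rw [(Linear.homCongr k (Iso.refl (M ⊞ N : C)) e).finrank_eq,
      finrank_biprod_left (k := k), finrank_biprod_right (k := k),
      finrank_biprod_right (k := k)]
  have hsym : finrank k (M ⟶ N⟦(1:ℤ)⟧) = finrank k (N ⟶ M⟦(1:ℤ)⟧) := hCY M N
  omega
end
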